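/- Let P be a bounded linear operator on a Banach space X with ‖P − λI‖ ≤ 1 and suppose there is a dense subspace D ⊆ X with D = ⋃_{n≥0} ker((P−λI)^n). Suppose additionally P − λI is surjective on X. Then by Herzog–Schmoeger's theorem, for every t ≠ 0 the operator e^{t(P−λI)} (defined by the convergent exponential series) is hypercyclic on X. -/

import Mathlib

set_option maxHeartbeats 1000000

open Finset

namespace HSAux

variable {X : Type*} [NormedAddCommGroup X] [NormedSpace ℂ X] [CompleteSpace X]

lemma pow_apply_zero_mono (T : X →L[ℂ] X) {k K : ℕ} (hkK : k ≤ K) {x : X}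
    (hx : (T ^ k) x = 0) : (T ^ K) x = 0 := by
  have h : T ^ K = T ^ (K - k) * T ^ k := by
    rw [← pow_add, Nat.sub_add_cancel hkK]
  rw [h, ContinuousLinearMap.mul_apply, hx, map_zero]

lemma exp_apply_ker (T : X →L[ℂ] X) (a : ℂ) (M : ℕ) (x : X) (hx : (T ^ M) x = 0) :
    NormedSpace.exp (a • T) x
      = ∑ k ∈ Finset.range M, (((k.factorial : ℂ))⁻¹ * a ^ k) • (T ^ k) x := by
  have hsum := NormedSpace.expSeries_summable' (𝕂 := ℂ) (a • T)
  have h1 : NormedSpace.exp (a • T) x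
      = ∑' k : ℕ, (((k.factorial : ℂ))⁻¹ * a ^ k) • (T ^ k) x := by
    rw [NormedSpace.exp_eq_tsum (𝕂 := ℂ)]
    have h2 := (ContinuousLinearMap.apply ℂ X x).map_tsum hsum
    simp only [ContinuousLinearMap.apply_apply] at h2
    rw [h2]
    congr 1
    ext k
    simp [smul_pow, smul_smul, mul_comm]
  rw [h1]
  refine tsum_eq_sum ?_
  intro k hk
  have hk' : M ≤ k := by simpa using hk
  rw [pow_apply_zero_mono T hk' hx, smul_zero]

lemma sum_range_add' {M : Type*} [AddCommMonoid M] (f : ℕ → M) (p r : ℕ) :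
    ∑ k ∈ Finset.range (p + r), f k
      = ∑ k ∈ Finset.range p, f k + ∑ j ∈ Finset.range r, f (p + j) := by
  induction r with
  | zero => simp
  | succ r ih =>
      rw [← Nat.add_assoc, Finset.sum_range_succ, ih, Finset.sum_range_succ, add_assoc]

lemma fact_le_pow (q i : ℕ) (h : i ≤ q) : q.factorial ≤ (q - i).factorial * q ^ i := by
  induction i with
  | zero => simp
  | succ i ih =>
      have hi : i ≤ q := le_of_lt (Nat.lt_of_lt_of_le (Nat.lt_succ_self i) h)
      have h1 : q - i = (q - (i + 1)) + 1 := by omega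
      calc q.factorial ≤ (q - i).factorial * q ^ i := ih hi
        _ = (q - (i+1)).factorial * (q - i) * q ^ i := by
            rw [h1, Nat.factorial_succ, ← h1]; ring
        _ ≤ (q - (i+1)).factorial * q * q ^ i := by
            have : q - i ≤ q := Nat.sub_le _ _
            exact Nat.mul_le_mul_right _ (Nat.mul_le_mul_left _ this)
        _ = (q - (i+1)).factorial * q ^ (i+1) := by ring

lemma fact_ge_pow (q j : ℕ) : q.factorial * q ^ j ≤ (q + j).factorial := by
  induction j with
  | zero => simp
  | succ j ih =>
      calc q.factorial * q ^ (j+1) = (q.factorial * q ^ j) * q := by ring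
        _ ≤ (q + j).factorial * q := Nat.mul_le_mul_right _ ih
        _ ≤ (q + j).factorial * (q + j + 1) := by
            exact Nat.mul_le_mul_left _ (by omega)
        _ = (q + (j+1)).factorial := by
            have h : q + (j+1) = (q+j)+1 := by omega
            rw [h, Nat.factorial_succ]; ring

lemma exists_chain (T : X →L[ℂ] X) {C : ℝ}
    (hC : ∀ y : X, ∃ x, T x = y ∧ ‖x‖ ≤ C * ‖y‖) (w : X) :
    ∃ s : ℕ → X, s 0 = w ∧ (∀ i, T (s (i+1)) = s i) ∧ (∀ i, ‖s (i+1)‖ ≤ C * ‖s i‖) := by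
  refine ⟨fun i => Nat.rec w (fun _ prev => Classical.choose (hC prev)) i, rfl,
    fun i => (Classical.choose_spec (hC _)).1, fun i => (Classical.choose_spec (hC _)).2⟩

lemma key (T : X →L[ℂ] X) (hT1 : ‖T‖ ≤ 1) {C : ℝ} (hC1 : 1 ≤ C)
    (hC : ∀ y : X, ∃ x, T x = y ∧ ‖x‖ ≤ C * ‖y‖) (c : ℂ) (hc : c ≠ 0) :
    ∀ m : ℕ, ∀ ε : ℝ, 0 < ε → ∀ B : ℝ, 0 < B → ∃ n₀ : ℕ, ∀ n : ℕ, n₀ ≤ n →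
      ∀ w : X, (T ^ m) w = 0 → ‖w‖ ≤ B →
      ∃ r : X, ‖r‖ ≤ ε ∧ ‖NormedSpace.exp (((n : ℂ) * c) • T) r - w‖ ≤ ε := by
  have hT' : ∀ x : X, ‖T x‖ ≤ ‖x‖ := by
    intro x
    calc ‖T x‖ ≤ ‖T‖ * ‖x‖ := T.le_opNorm x
      _ ≤ 1 * ‖x‖ := by gcongr
      _ = ‖x‖ := one_mul _
  have hTpow : ∀ (k : ℕ) (x : X), ‖(T ^ k) x‖ ≤ ‖x‖ := by
    intro k
    induction k with
    | zero => intro x; simp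
    | succ k ih =>
        intro x
        rw [pow_succ, ContinuousLinearMap.mul_apply]
        exact le_trans (ih _) (hT' x)
  intro m
  induction m with
  | zero =>
      intro ε hε B hB
      refine ⟨0, fun n _ w hw _ => ?_⟩
      have hw0 : w = 0 := by simpa using hw
      exact ⟨0, by simp [hε.le], by simp [hw0, hε.le]⟩
  | succ m IH =>
      intro ε hε B hB
      set K : ℝ := max 2 (4 * B / ε) with hKdef
      have hK2 : (2:ℝ) ≤ K := le_max_left _ _
      have hKB : 4 * B / ε ≤ K := le_max_right _ _
      have hK0 : (0:ℝ) < K := lt_of_lt_of_le two_pos hK2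
      have hc0 : (0:ℝ) < ‖c‖ := norm_pos_iff.mpr hc
      have hC0 : (0:ℝ) < C := lt_of_lt_of_le one_pos hC1
      set θ : ℝ := ‖c‖ / (C * K) with hθdef
      have hθ0 : 0 < θ := by positivity
      set β : ℝ := 2 * C * K with hβdef
      have hβ1 : (1:ℝ) ≤ β := by nlinarith
      set B' : ℝ := (m : ℝ) * β ^ m * B + 1 with hB'def
      have hB'0 : 0 < B' := by positivity
      obtain ⟨n₁, hIH⟩ := IH (ε/2) (by positivity) B' hB'0
      obtain ⟨Q₀, hQ₀⟩ : ∃ Q₀ : ℕ, ∀ q : ℕ, Q₀ ≤ q → (1/2:ℝ)^q * B ≤ ε/2 := by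
        have h := tendsto_pow_atTop_nhds_zero_of_lt_one
          (by norm_num : (0:ℝ) ≤ 1/2) (by norm_num : (1/2:ℝ) < 1)
        have h2 : ∀ᶠ x : ℕ in Filter.atTop, (1/2:ℝ)^x < ε/(2*B) :=
          h.eventually_lt_const (by positivity)
        obtain ⟨Q₀, hQ⟩ := Filter.eventually_atTop.mp h2
        refine ⟨Q₀, fun q hq => ?_⟩
        have h3 := hQ q hq
        rw [lt_div_iff₀ (by positivity : (0:ℝ) < 2*B)] at h3
        nlinarith
      set n₂ : ℕ := ⌈(2 * ((Q₀:ℝ) + 1)) / θ⌉₊ with hn₂def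
      refine ⟨max n₁ n₂ + 1, ?_⟩
      intro n hn w hw hwB
      have hn₁ : n₁ ≤ n := le_trans (le_trans (le_max_left _ _) (Nat.le_succ _)) hn
      have hn₂ : n₂ ≤ n := le_trans (le_trans (le_max_right _ _) (Nat.le_succ _)) hn
      have hn1 : 1 ≤ n := le_trans (by omega) hn
      have hnR : (0:ℝ) < (n:ℝ) := by exact_mod_cast hn1
      have hθn : 2 * ((Q₀:ℝ) + 1) ≤ θ * n := by
        have h1 := Nat.le_ceil ((2 * ((Q₀:ℝ) + 1)) / θ)
        have h2 : ((n₂:ℝ)) ≤ (n:ℝ) := Nat.cast_le.mpr hn₂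
        have h3 : (2 * ((Q₀:ℝ) + 1)) / θ ≤ (n:ℝ) := le_trans h1 h2
        rw [div_le_iff₀ hθ0] at h3
        linarith [h3]
      set q : ℕ := ⌊θ * (n:ℝ)⌋₊ with hqdef
      have hq_le : (q:ℝ) ≤ θ * n := Nat.floor_le (by positivity)
      have hθn2 : (2:ℝ) ≤ θ * n := by
        have h0 : (0:ℝ) ≤ (Q₀:ℝ) := Nat.cast_nonneg _
        linarith
      have hq_ge : θ * n ≤ 2 * q := by
        have h1 : θ * (n:ℝ) < q + 1 := Nat.lt_floor_add_one _
        linarith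
      have hq0 : (0:ℝ) < (q:ℝ) := by linarith
      have hq1 : 1 ≤ q := by exact_mod_cast hq0
      have hqQ : Q₀ ≤ q := by
        have h0 : (Q₀:ℝ) ≤ (q:ℝ) := by linarith
        exact_mod_cast h0
      set z : ℝ := (n:ℝ) * ‖c‖ with hzdef
      have hz0 : 0 < z := by positivity
      set nc : ℂ := (n:ℂ) * c with hncdef
      have hnc_norm : ‖nc‖ = z := by
        rw [hncdef, norm_mul, Complex.norm_natCast, hzdef]
      have hnc0 : nc ≠ 0 := by
        rw [hncdef]
        exact mul_ne_zero (Nat.cast_ne_zero.mpr (by omega)) hc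
      set a : ℝ := (q:ℝ) * C / z with hadef
      have ha0 : 0 ≤ a := by positivity
      have hθCK : θ * (C * K) = ‖c‖ := by
        rw [hθdef]; field_simp
      have haK : a ≤ 1 / K := by
        rw [hadef, div_le_div_iff₀ hz0 hK0]
        have h4 : (q:ℝ) * (C*K) ≤ (θ*n) * (C*K) :=
          mul_le_mul_of_nonneg_right hq_le (by positivity)
        have h5 : (θ*n)*(C*K) = (n:ℝ) * ‖c‖ := by
          rw [mul_comm θ (n:ℝ), mul_assoc, hθCK]
        have h6 : z = (n:ℝ) * ‖c‖ := hzdef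
        linarith
      have ha2 : a ≤ 1/2 := by
        refine le_trans haK ?_
        rw [div_le_div_iff₀ hK0 (by norm_num : (0:ℝ) < 2)]
        linarith
      have hzq : z / (q:ℝ) ≤ β := by
        rw [div_le_iff₀ hq0]
        have hβθ : β * θ = 2 * ‖c‖ := by
          rw [hβdef, hθdef]; field_simp
        have h6 : β * (θ*n) ≤ β * (2*q) := mul_le_mul_of_nonneg_left hq_ge (by positivity)
        have h7 : β * (θ*n) = 2 * ((n:ℝ)*‖c‖) := by rw [← mul_assoc, hβθ]; ring
        have h8 : z = (n:ℝ) * ‖c‖ := hzdef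
        linarith
      -- chain of preimages
      obtain ⟨s, hs0, hsT, hsN⟩ := exists_chain T hC w
      have hsnorm : ∀ i, ‖s i‖ ≤ C ^ i * B := by
        intro i
        induction i with
        | zero => simpa [hs0] using hwB
        | succ i ih =>
            calc ‖s (i+1)‖ ≤ C * ‖s i‖ := hsN i
              _ ≤ C * (C ^ i * B) := by
                  exact mul_le_mul_of_nonneg_left ih (le_of_lt hC0)
              _ = C ^ (i+1) * B := by ring
      have hpow : ∀ k i, (T ^ k) (s (k + i)) = s i := by
        intro k
        induction k with
        | zero => intro i; simp
        | succ k ih =>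
            intro i
            have e : k + 1 + i = (k + i) + 1 := by omega
            rw [e, pow_succ, ContinuousLinearMap.mul_apply, hsT (k+i), ih i]
      have hTq : (T ^ q) (s q) = w := by
        have h := hpow q 0
        simpa [hs0] using h
      have hTqj : ∀ j, (T ^ (q + j)) (s q) = (T ^ j) w := by
        intro j
        have e : q + j = j + q := Nat.add_comm _ _
        rw [e, pow_add, ContinuousLinearMap.mul_apply, hTq]
      have hker : (T ^ (q + (m+1))) (s q) = 0 := by
        rw [hTqj (m+1), hw]
      set γ : ℂ := (q.factorial : ℂ) / nc ^ q with hγdef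
      have hγnorm : ‖γ‖ = (q.factorial : ℝ) / z ^ q := by
        rw [hγdef, norm_div, norm_pow, hnc_norm, Complex.norm_natCast]
      set r₁ : X := γ • s q with hr₁def
      set dcoef : ℕ → ℂ := fun k => γ * (((k.factorial:ℂ))⁻¹ * nc ^ k) with hdcoefdef
      have hexp1 : NormedSpace.exp (nc • T) r₁
          = ∑ k ∈ Finset.range (q + (m+1)), dcoef k • (T ^ k) (s q) := by
        rw [hr₁def, map_smul, exp_apply_ker T nc (q+(m+1)) (s q) hker, Finset.smul_sum]
        refine Finset.sum_congr rfl fun k _ => ?_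
        rw [smul_smul]
      set E : X := ∑ j ∈ Finset.range m, dcoef (q + (j+1)) • (T ^ (j+1)) w with hEdef
      have hmain : NormedSpace.exp (nc • T) r₁ - w
          = (∑ k ∈ Finset.range q, dcoef k • s (q - k)) + E := by
        rw [hexp1, sum_range_add']
        have h1st : ∑ k ∈ Finset.range q, dcoef k • (T ^ k) (s q)
            = ∑ k ∈ Finset.range q, dcoef k • s (q - k) := by
          refine Finset.sum_congr rfl fun k hk => ?_
          have hkq : k ≤ q := le_of_lt (Finset.mem_range.mp hk)
          have e : k + (q - k) = q := by omega
          rw [show (T ^ k) (s q) = (T ^ k) (s (k + (q-k))) by rw [e], hpow k (q-k)]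
        have h2nd : ∑ j ∈ Finset.range (m+1), dcoef (q+j) • (T ^ (q+j)) (s q)
            = w + E := by
          rw [Finset.sum_range_succ']
          have h0 : dcoef (q+0) • (T ^ (q+0)) (s q) = w := by
            have hd1 : dcoef q = 1 := by
              rw [hdcoefdef]
              simp only []
              rw [hγdef]
              field_simp
              exact div_self (by exact_mod_cast q.factorial_ne_zero)
            have he : (T ^ (q+0)) (s q) = w := by
              rw [Nat.add_zero, hTq]
            rw [Nat.add_zero] at *
            rw [hd1, he, one_smul]
          rw [h0, hEdef]
          rw [add_comm]
          congr 1
          refine Finset.sum_congr rfl fun j _ => ?_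
          rw [hTqj (j+1)]
        rw [h1st, h2nd]
        abel
      have hd_norm : ∀ k, ‖dcoef k‖ = ((q.factorial:ℝ) / z ^ q) * (((k.factorial:ℝ))⁻¹ * z ^ k) := by
        intro k
        rw [hdcoefdef]
        simp only []
        rw [norm_mul, hγnorm, norm_mul, norm_inv, norm_pow, hnc_norm, Complex.norm_natCast]
      have hterm : ∀ k ∈ Finset.range q, ‖dcoef k • s (q-k)‖ ≤ a ^ (q-k) * B := by
        intro k hk
        have hkq : k ≤ q := le_of_lt (Finset.mem_range.mp hk)
        have hk0 : (0:ℝ) < (k.factorial:ℝ) := by exact_mod_cast k.factorial_pos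
        have hfact : (q.factorial:ℝ) ≤ (k.factorial:ℝ) * (q:ℝ)^(q-k) := by
          have h := fact_le_pow q (q-k) (by omega)
          have e : q - (q-k) = k := by omega
          rw [e] at h
          exact_mod_cast h
        have hzsplit : z ^ q = z ^ k * z ^ (q-k) := by
          rw [← pow_add]; congr 1; omega
        have h1 : ‖dcoef k‖ ≤ ((q:ℝ)/z) ^ (q-k) := by
          rw [hd_norm k]
          calc (q.factorial:ℝ)/z^q * (((k.factorial:ℝ))⁻¹ * z^k)
              = (q.factorial:ℝ) / ((k.factorial:ℝ) * z^(q-k)) := by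
                rw [hzsplit]; field_simp
            _ ≤ ((k.factorial:ℝ) * (q:ℝ)^(q-k)) / ((k.factorial:ℝ) * z^(q-k)) := by gcongr
            _ = (q:ℝ)^(q-k) / z^(q-k) := by
                rw [mul_div_mul_left _ _ (ne_of_gt hk0)]
            _ = ((q:ℝ)/z)^(q-k) := (div_pow _ _ _).symm
        have ha' : a = (q:ℝ)/z * C := by rw [hadef]; ring
        calc ‖dcoef k • s (q-k)‖ = ‖dcoef k‖ * ‖s (q-k)‖ := norm_smul _ _
          _ ≤ ((q:ℝ)/z)^(q-k) * (C^(q-k) * B) :=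
              mul_le_mul h1 (hsnorm _) (norm_nonneg _) (by positivity)
          _ = a^(q-k) * B := by rw [ha', mul_pow]; ring
      have hLowsum : ∑ k ∈ Finset.range q, a^(q-k) * B ≤ ε/2 := by
        have hreflect : ∑ k ∈ Finset.range q, a^(q-k) * B
            = ∑ j ∈ Finset.range q, a^(j+1) * B := by
          rw [← Finset.sum_range_reflect (fun j => a^(j+1) * B) q]
          refine Finset.sum_congr rfl fun k hk => ?_
          have hkq : k < q := Finset.mem_range.mp hk
          congr 2
          omega
        have hgeom : ∑ j ∈ Finset.range q, a^j ≤ 2 := by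
          have h1a : a ≠ 1 := by linarith
          rw [geom_sum_eq h1a]
          have hub : a^q ≤ 1 := pow_le_one₀ ha0 (by linarith)
          have hpq : 0 ≤ a^q := by positivity
          rw [div_le_iff_of_neg (by linarith : a - 1 < 0)]
          linarith
        have hfac : ∑ j ∈ Finset.range q, a^(j+1) * B
            = (∑ j ∈ Finset.range q, a^j) * (a * B) := by
          rw [Finset.sum_mul]
          refine Finset.sum_congr rfl fun j _ => ?_
          rw [pow_succ]; ring
        rw [hreflect, hfac]
        have hK' : a * B ≤ ε/4 := by
          have h1 : a * B ≤ (1/K) * B := mul_le_mul_of_nonneg_right haK hB.le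
          have h2 : (1/K) * B ≤ ε/4 := by
            rw [div_mul_eq_mul_div, one_mul, div_le_div_iff₀ hK0 (by norm_num : (0:ℝ) < 4)]
            have h3 : 4 * B / ε ≤ K := hKB
            rw [div_le_iff₀ hε] at h3
            nlinarith
          linarith
        have hsn : 0 ≤ ∑ j ∈ Finset.range q, a^j :=
          Finset.sum_nonneg fun j _ => by positivity
        have hab : 0 ≤ a * B := by positivity
        calc (∑ j ∈ Finset.range q, a^j) * (a*B) ≤ 2 * (a*B) :=
              mul_le_mul_of_nonneg_right hgeom hab
          _ ≤ 2 * (ε/4) := by linarith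
          _ = ε/2 := by ring
      have hLow : ‖∑ k ∈ Finset.range q, dcoef k • s (q-k)‖ ≤ ε/2 :=
        le_trans (le_trans (norm_sum_le _ _) (Finset.sum_le_sum hterm)) hLowsum
      have hr₁ : ‖r₁‖ ≤ ε/2 := by
        have h1 : ‖r₁‖ ≤ (q.factorial:ℝ)/z^q * (C^q * B) := by
          rw [hr₁def, norm_smul, hγnorm]
          exact mul_le_mul_of_nonneg_left (hsnorm q) (by positivity)
        have hfq : (q.factorial:ℝ) ≤ (q:ℝ)^q := by
          have h := fact_le_pow q q le_rfl
          simp only [Nat.sub_self, Nat.factorial_zero, one_mul] at h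
          exact_mod_cast h
        have h2 : (q.factorial:ℝ)/z^q * (C^q * B) ≤ a^q * B := by
          have hexp : a^q * B = ((q:ℝ)^q * C^q / z^q) * B := by
            rw [hadef, div_pow, mul_pow]
          rw [hexp]
          have h7 : (q.factorial:ℝ) * C^q ≤ (q:ℝ)^q * C^q :=
            mul_le_mul_of_nonneg_right hfq (by positivity)
          have h8 : (0:ℝ) < z^q := by positivity
          rw [div_mul_eq_mul_div, div_mul_eq_mul_div, div_le_div_iff₀ h8 h8]
          have h9 := mul_le_mul_of_nonneg_right h7 (mul_nonneg hB.le h8.le)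
          nlinarith [h9]
        have h3 : a^q * B ≤ (1/2:ℝ)^q * B :=
          mul_le_mul_of_nonneg_right (pow_le_pow_left₀ ha0 ha2 q) hB.le
        have h4 := hQ₀ q hqQ
        linarith
      have hEker : (T ^ m) E = 0 := by
        rw [hEdef, map_sum]
        refine Finset.sum_eq_zero fun j hj => ?_
        rw [map_smul]
        have h0 : (T ^ m) ((T ^ (j+1)) w) = 0 := by
          rw [← ContinuousLinearMap.mul_apply, ← pow_add]
          exact pow_apply_zero_mono T (by omega) hw
        rw [h0, smul_zero]
      have hEnorm : ‖E‖ ≤ B' := by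
        have hterm2 : ∀ j ∈ Finset.range m, ‖dcoef (q+(j+1)) • (T^(j+1)) w‖ ≤ β^m * B := by
          intro j hj
          have hjm : j + 1 ≤ m := Finset.mem_range.mp hj
          have hfge : (q.factorial:ℝ) * (q:ℝ)^(j+1) ≤ ((q+(j+1)).factorial:ℝ) := by
            exact_mod_cast fact_ge_pow q (j+1)
          have hfac0 : (0:ℝ) < (((q+(j+1)).factorial):ℝ) := by
            exact_mod_cast Nat.factorial_pos _
          have hd : ‖dcoef (q+(j+1))‖ ≤ (z/(q:ℝ))^(j+1) := by
            rw [hd_norm]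
            have hzsplit : z^(q+(j+1)) = z^q * z^(j+1) := pow_add z q (j+1)
            calc (q.factorial:ℝ)/z^q * (((((q+(j+1)).factorial):ℝ))⁻¹ * z^(q+(j+1)))
                = (q.factorial:ℝ) * z^(j+1) / (((q+(j+1)).factorial):ℝ) := by
                  rw [hzsplit]; field_simp
              _ ≤ z^(j+1) / (q:ℝ)^(j+1) := by
                  rw [div_le_div_iff₀ hfac0 (by positivity : (0:ℝ) < (q:ℝ)^(j+1))]
                  have h5 : 0 ≤ z^(j+1) := by positivity
                  nlinarith
              _ = (z/(q:ℝ))^(j+1) := (div_pow _ _ _).symm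
          have hTw : ‖(T^(j+1)) w‖ ≤ B := le_trans (hTpow (j+1) w) hwB
          have hβj : (z/(q:ℝ))^(j+1) ≤ β^m := by
            calc (z/(q:ℝ))^(j+1) ≤ β^(j+1) := pow_le_pow_left₀ (by positivity) hzq (j+1)
              _ ≤ β^m := pow_le_pow_right₀ hβ1 hjm
          calc ‖dcoef (q+(j+1)) • (T^(j+1)) w‖
              = ‖dcoef (q+(j+1))‖ * ‖(T^(j+1)) w‖ := norm_smul _ _
            _ ≤ β^m * B := mul_le_mul (le_trans hd hβj) hTw (norm_nonneg _) (by positivity)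
        have hcard : ∑ _j ∈ Finset.range m, β^m * B = (m:ℝ) * (β^m * B) := by
          rw [Finset.sum_const, Finset.card_range, nsmul_eq_mul]
        have hm : (m:ℝ) * (β^m * B) = (m:ℝ) * β^m * B := by ring
        calc ‖E‖ ≤ ∑ j ∈ Finset.range m, ‖dcoef (q+(j+1)) • (T^(j+1)) w‖ := by
              rw [hEdef]; exact norm_sum_le _ _
          _ ≤ ∑ _j ∈ Finset.range m, β^m * B := Finset.sum_le_sum hterm2
          _ = (m:ℝ) * (β^m * B) := hcard
          _ ≤ B' := by rw [hB'def]; linarith [hm.le]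
      obtain ⟨r₂, hr₂n, hr₂e⟩ := hIH n hn₁ E hEker hEnorm
      refine ⟨r₁ - r₂, ?_, ?_⟩
      · calc ‖r₁ - r₂‖ ≤ ‖r₁‖ + ‖r₂‖ := norm_sub_le _ _
          _ ≤ ε/2 + ε/2 := add_le_add hr₁ hr₂n
          _ = ε := by ring
      · have hep : NormedSpace.exp (nc • T) (r₁ - r₂) - w
            = (∑ k ∈ Finset.range q, dcoef k • s (q - k))
              + (E - NormedSpace.exp (nc • T) r₂) := by
          rw [map_sub]
          rw [show NormedSpace.exp (nc • T) r₁ - NormedSpace.exp (nc • T) r₂ - w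
              = (NormedSpace.exp (nc • T) r₁ - w) - NormedSpace.exp (nc • T) r₂ from by abel,
            hmain]
          abel
        rw [hep]
        have h6 : ‖E - NormedSpace.exp (nc • T) r₂‖ ≤ ε/2 := by
          rw [norm_sub_rev]; exact hr₂e
        calc ‖(∑ k ∈ Finset.range q, dcoef k • s (q - k))
              + (E - NormedSpace.exp (nc • T) r₂)‖
            ≤ ‖∑ k ∈ Finset.range q, dcoef k • s (q - k)‖
              + ‖E - NormedSpace.exp (nc • T) r₂‖ := norm_add_le _ _
          _ ≤ ε/2 + ε/2 := add_le_add hLow h6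
          _ = ε := by ring


end HSAux

/-- Herzog–Schmoeger application: if `X` is a separable infinite-dimensional Banach space,
`‖P − λI‖ ≤ 1`, `⋃ₙ ker((P−λI)ⁿ)` is dense, and `P − λI` is surjective, then for every
`t ≠ 0` the operator `e^{t(P−λI)}` is hypercyclic on `X`. -/
theorem exp_of_nilpotent_approx_hypercyclic
    {X : Type*} [NormedAddCommGroup X] [NormedSpace ℂ X] [CompleteSpace X]
    [TopologicalSpace.SeparableSpace X] (hinf : ¬ FiniteDimensional ℂ X)
    (P : X →L[ℂ] X) (lam : ℂ)
    (hnorm : ‖P - lam • (1 : X →L[ℂ] X)‖ ≤ 1)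
    (hdense : Dense (⋃ n : ℕ, (LinearMap.ker (((P - lam • (1 : X →L[ℂ] X)) ^ n : X →L[ℂ] X) : X →ₗ[ℂ] X) : Set X)))
    (hsurj : Function.Surjective (P - lam • (1 : X →L[ℂ] X)))
    (t : ℂ) (ht : t ≠ 0) :
    ∃ f : X, Dense (Set.range fun n : ℕ =>
      ((NormedSpace.exp (t • (P - lam • (1 : X →L[ℂ] X)))) ^ n) f) := by
  classical
  set T : X →L[ℂ] X := P - lam • (1 : X →L[ℂ] X) with hTdef
  obtain ⟨C₀, hC₀pos, hC₀⟩ := T.exists_preimage_norm_le hsurj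
  set C : ℝ := max C₀ 1 with hCdef
  have hC1 : (1:ℝ) ≤ C := le_max_right _ _
  have hC : ∀ y : X, ∃ x, T x = y ∧ ‖x‖ ≤ C * ‖y‖ := by
    intro y
    obtain ⟨x, hx1, hx2⟩ := hC₀ y
    exact ⟨x, hx1, le_trans hx2
      (mul_le_mul_of_nonneg_right (le_max_left _ _) (norm_nonneg _))⟩
  have hD : ∀ (x : X) (δ : ℝ), 0 < δ →
      ∃ u : X, (∃ mu : ℕ, (T ^ mu) u = 0) ∧ ‖u - x‖ < δ := by
    intro x δ hδ
    obtain ⟨u, hu1, hu2⟩ := Metric.dense_iff.mp hdense x δ hδ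
    obtain ⟨mu, hmu⟩ := Set.mem_iUnion.mp hu2
    refine ⟨u, ⟨mu, ?_⟩, ?_⟩
    · exact LinearMap.mem_ker.mp hmu
    · rw [← dist_eq_norm]
      exact Metric.mem_ball.mp hu1
  set A : X →L[ℂ] X := NormedSpace.exp (t • T) with hAdef
  have hApow : ∀ (n : ℕ) (y : X),
      (A ^ n) y = NormedSpace.exp (((n:ℂ) * t) • T) y := by
    intro n y
    have h : ((n:ℂ) * t) • T = n • (t • T) := by
      rw [← Nat.cast_smul_eq_nsmul ℂ, smul_smul]
    letI : NormedAlgebra ℚ (X →L[ℂ] X) := NormedAlgebra.restrictScalars ℚ ℂ (X →L[ℂ] X)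
    rw [h, NormedSpace.exp_nsmul, hAdef]
  have htrans : ∀ (x v : X) (δ : ℝ), 0 < δ → ∃ (n : ℕ) (y : X),
      ‖y - x‖ < δ ∧ ‖(A ^ n) y - v‖ < δ := by
    intro x v δ hδ
    obtain ⟨u, ⟨m₁, hm₁⟩, hux⟩ := hD x (δ/2) (by positivity)
    obtain ⟨w, ⟨m₂, hm₂⟩, hwv⟩ := hD v (δ/2) (by positivity)
    set m := max m₁ m₂ with hmdef
    have hu' : (T ^ m) u = 0 := HSAux.pow_apply_zero_mono T (le_max_left _ _) hm₁
    have hw' : (T ^ m) w = 0 := HSAux.pow_apply_zero_mono T (le_max_right _ _) hm₂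
    set B : ℝ := max ‖u‖ ‖w‖ + 1 with hBdef
    have hB0 : 0 < B := by positivity
    have hεp : (0:ℝ) < δ/8 := by positivity
    obtain ⟨n₁, h₁⟩ := HSAux.key T hnorm hC1 hC t ht m (δ/8) hεp B hB0
    obtain ⟨n₂, h₂⟩ := HSAux.key T hnorm hC1 hC (-t) (neg_ne_zero.mpr ht) m (δ/8) hεp B hB0
    set n := max n₁ n₂ with hndef
    obtain ⟨r₂, hr₂n, hr₂e⟩ := h₁ n (le_max_left _ _) w hw' (by
      have h5 := le_max_right ‖u‖ ‖w‖
      rw [hBdef]; linarith)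
    obtain ⟨r₁, hr₁n, hr₁e⟩ := h₂ n (le_max_right _ _) u hu' (by
      have h5 := le_max_left ‖u‖ ‖w‖
      rw [hBdef]; linarith)
    set y := NormedSpace.exp (((n:ℂ) * (-t)) • T) r₁ + r₂ with hydef
    refine ⟨n, y, ?_, ?_⟩
    · have he : y - x = (NormedSpace.exp (((n:ℂ) * (-t)) • T) r₁ - u) + r₂ + (u - x) := by
        rw [hydef]; abel
      rw [he]
      calc ‖(NormedSpace.exp (((n:ℂ) * (-t)) • T) r₁ - u) + r₂ + (u - x)‖
          ≤ ‖(NormedSpace.exp (((n:ℂ) * (-t)) • T) r₁ - u) + r₂‖ + ‖u - x‖ :=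
            norm_add_le _ _
        _ ≤ ‖NormedSpace.exp (((n:ℂ) * (-t)) • T) r₁ - u‖ + ‖r₂‖ + ‖u - x‖ := by
            have := norm_add_le (NormedSpace.exp (((n:ℂ) * (-t)) • T) r₁ - u) r₂
            linarith
        _ < δ := by linarith
    · have hcomm : Commute (((n:ℂ)*t) • T) (((n:ℂ)*(-t)) • T) :=
        ((Commute.refl T).smul_left _).smul_right _
      have hmul : NormedSpace.exp (((n:ℂ)*t) • T) * NormedSpace.exp (((n:ℂ)*(-t)) • T)
          = 1 := by
        letI : NormedAlgebra ℚ (X →L[ℂ] X) := NormedAlgebra.restrictScalars ℚ ℂ (X →L[ℂ] X)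
        rw [← NormedSpace.exp_add_of_commute hcomm,
          ← add_smul, show (n:ℂ)*t + (n:ℂ)*(-t) = 0 from by ring, zero_smul,
          NormedSpace.exp_zero]
      have hAy : (A ^ n) y = r₁ + NormedSpace.exp (((n:ℂ) * t) • T) r₂ := by
        rw [hApow n y, hydef, map_add]
        congr 1
        rw [← ContinuousLinearMap.mul_apply, hmul, ContinuousLinearMap.one_apply]
      rw [hAy]
      have he : r₁ + NormedSpace.exp (((n:ℂ) * t) • T) r₂ - v
          = r₁ + (NormedSpace.exp (((n:ℂ) * t) • T) r₂ - w) + (w - v) := by abel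
      rw [he]
      calc ‖r₁ + (NormedSpace.exp (((n:ℂ) * t) • T) r₂ - w) + (w - v)‖
          ≤ ‖r₁ + (NormedSpace.exp (((n:ℂ) * t) • T) r₂ - w)‖ + ‖w - v‖ :=
            norm_add_le _ _
        _ ≤ ‖r₁‖ + ‖NormedSpace.exp (((n:ℂ) * t) • T) r₂ - w‖ + ‖w - v‖ := by
            have := norm_add_le r₁ (NormedSpace.exp (((n:ℂ) * t) • T) r₂ - w)
            linarith
        _ < δ := by linarith
  have hne : Nonempty X := ⟨0⟩
  set u : ℕ → X := TopologicalSpace.denseSeq X with hudef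
  have hu : DenseRange u := TopologicalSpace.denseRange_denseSeq X
  set W : ℕ × ℕ → Set X := fun p =>
    ⋃ n : ℕ, (fun y => (A ^ n) y) ⁻¹' Metric.ball (u p.1) (1/(p.2+1)) with hWdef
  have hWopen : ∀ p, IsOpen (W p) := fun p =>
    isOpen_iUnion fun n => (Metric.isOpen_ball).preimage (A ^ n).continuous
  have hWdense : ∀ p, Dense (W p) := by
    intro p
    rw [Metric.dense_iff]
    intro x r hr
    have hδ : (0:ℝ) < min r (1/(p.2+1)) := lt_min hr (by positivity)
    obtain ⟨n, y, hy1, hy2⟩ := htrans x (u p.1) _ hδ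
    refine ⟨y, Metric.mem_ball.mpr ?_, Set.mem_iUnion.mpr ⟨n, ?_⟩⟩
    · rw [dist_eq_norm]
      exact lt_of_lt_of_le hy1 (min_le_left _ _)
    · simp only [Set.mem_preimage, Metric.mem_ball]
      rw [dist_eq_norm]
      exact lt_of_lt_of_le hy2 (min_le_right _ _)
  have hG : Dense (⋂ p, W p) := dense_iInter_of_isOpen hWopen hWdense
  obtain ⟨f, hf⟩ := hG.nonempty
  refine ⟨f, ?_⟩
  rw [Metric.dense_iff]
  intro x r hr
  obtain ⟨i, hi⟩ := hu.exists_dist_lt x (by positivity : (0:ℝ) < r/2)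
  obtain ⟨j, hj⟩ := exists_nat_one_div_lt (by positivity : (0:ℝ) < r/2)
  have hfij := Set.mem_iInter.mp hf (i, j)
  obtain ⟨n, hn⟩ := Set.mem_iUnion.mp hfij
  refine ⟨(A ^ n) f, Metric.mem_ball.mpr ?_, Set.mem_range_self n⟩
  have h1 : dist ((A^n) f) (u i) < 1/((j:ℝ)+1) := by
    simpa [Set.mem_preimage, Metric.mem_ball] using hn
  calc dist ((A^n) f) x ≤ dist ((A^n) f) (u i) + dist (u i) x := dist_triangle _ _ _
    _ < 1/((j:ℝ)+1) + r/2 := by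
        rw [dist_comm (u i) x]
        exact add_lt_add h1 hi
    _ < r/2 + r/2 := by linarith
    _ = r := by ring
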